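/- arXiv:1901.03048 — 2 statements merged into one kernel-verified Lean document; each statement's English description precedes it below -/
import Mathlib

section
/- Let μ ∈ M^p and for r > 0 let μ^(r) be the restriction of μ to {x ∈ Ω : d(x,∂Ω) > r}. Then OT_p(μ^(r), μ)^p ≤ Pers_p(μ) − Pers_p(μ^(r)), and consequently OT_p(μ^(r), μ) → 0 as r → 0. -/
noncomputable section

open MeasureTheory Metric Set Filter Topology ENNReal
open scoped Classical

/-- The plane with the Euclidean distance. -/
abbrev Pt : Type := EuclideanSpace ℝ (Fin 2)

/-- Build a point of the plane from coordinates. -/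
def mk2 (a b : ℝ) : Pt := (WithLp.equiv 2 (Fin 2 → ℝ)).symm ![a, b]

/-- The open upper half-plane Ω = {(t₁,t₂) : t₂ > t₁}. -/
def UHP : Set Pt := {x | x 0 < x 1}

/-- The diagonal ∂Ω = {(t,t)}. -/
def Diag : Set Pt := {x | x 0 = x 1}

/-- Ω̄ = Ω ∪ ∂Ω. -/
def UHPbar : Set Pt := UHP ∪ Diag

/-- Distance from a point to the diagonal. -/
def persDist (x : Pt) : ℝ := infDist x Diag

/-- p-th total persistence Pers_p(μ) = ∫_Ω d(x,∂Ω)^p dμ(x). -/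
def Pers (p : ℝ) (μ : Measure Pt) : ℝ≥0∞ :=
  ∫⁻ x in UHP, ENNReal.ofReal (persDist x ^ p) ∂μ

/-- μ ∈ M^p : a measure supported on Ω with finite p-th persistence. -/
def MemMp (p : ℝ) (μ : Measure Pt) : Prop := μ UHPᶜ = 0 ∧ Pers p μ < ⊤

/-- Admissible partial transport plans between μ and ν: measures on Ω̄ × Ω̄ whose
marginals restricted to Ω are μ and ν. -/
def Adm (μ ν : Measure Pt) : Set (Measure (Pt × Pt)) :=
  {π | π ((UHPbar ×ˢ UHPbar)ᶜ) = 0 ∧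
    (∀ A : Set Pt, MeasurableSet A → A ⊆ UHP → π (A ×ˢ univ) = μ A) ∧
    (∀ B : Set Pt, MeasurableSet B → B ⊆ UHP → π (univ ×ˢ B) = ν B)}

/-- Cost C_p(π) = ∬ d(x,y)^p dπ(x,y). -/
def Cost (p : ℝ) (π : Measure (Pt × Pt)) : ℝ≥0∞ :=
  ∫⁻ z, ENNReal.ofReal (dist z.1 z.2 ^ p) ∂π

/-- OT_p(μ,ν)^p, as an extended real. -/
def OTe (p : ℝ) (μ ν : Measure Pt) : ℝ≥0∞ := ⨅ π ∈ Adm μ ν, Cost p π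

/-- The optimal partial transport distance OT_p(μ,ν). -/
def OT (p : ℝ) (μ ν : Measure Pt) : ℝ := (OTe p μ ν ^ (1 / p)).toReal

/-- Optimal plans. -/
def OptSet (p : ℝ) (μ ν : Measure Pt) : Set (Measure (Pt × Pt)) :=
  {π | π ∈ Adm μ ν ∧ Cost p π = OTe p μ ν}

/-- Vague convergence of measures on Ω: convergence of integrals of continuous
functions compactly supported in Ω. -/
def VagueTendsto (μs : ℕ → Measure Pt) (μ : Measure Pt) : Prop :=
  ∀ f : Pt → ℝ, Continuous f → HasCompactSupport f → tsupport f ⊆ UHP →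
    Tendsto (fun n => ∫ x, f x ∂(μs n)) atTop (𝓝 (∫ x, f x ∂μ))

/-- E_Ω = (Ω̄ × Ω̄) \ (∂Ω × ∂Ω). -/
def EOm : Set (Pt × Pt) := (UHPbar ×ˢ UHPbar) \ (Diag ×ˢ Diag)

/-- Vague convergence of plans on E_Ω. -/
def VaguePlanTendsto (πs : ℕ → Measure (Pt × Pt)) (π : Measure (Pt × Pt)) : Prop :=
  ∀ f : Pt × Pt → ℝ, Continuous f → HasCompactSupport f → tsupport f ⊆ EOm →
    Tendsto (fun n => ∫ z, f z ∂(πs n)) atTop (𝓝 (∫ z, f z ∂π))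

/-- A persistence diagram: an ℕ-valued point measure Σ_{x ∈ X} n_x δ_x with
X ⊆ Ω locally finite in Ω. -/
def IsDiagram (μ : Measure Pt) : Prop :=
  ∃ (X : Set Pt) (n : Pt → ℕ), X ⊆ UHP ∧
    (∀ x ∈ UHP, ∃ U ∈ 𝓝 x, (X ∩ U).Finite) ∧
    μ = Measure.sum (fun x : X => (n x.1 : ℝ≥0∞) • Measure.dirac (x.1 : Pt))

/-- Support of a measure on Pt × Pt. -/
def msupp (π : Measure (Pt × Pt)) : Set (Pt × Pt) := {z | ∀ U ∈ 𝓝 z, π U ≠ 0}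

/-- Support of a measure on Pt. -/
def suppM (μ : Measure Pt) : Set Pt := {x | ∀ U ∈ 𝓝 x, μ U ≠ 0}

/-- Bottleneck cost of a plan: sup of d(x,y) over the support. -/
def CostInf (π : Measure (Pt × Pt)) : ℝ≥0∞ :=
  ⨆ z ∈ msupp π, ENNReal.ofReal (dist z.1 z.2)

/-- The bottleneck (∞) optimal partial transport distance, as extended real. -/
def OTinfE (μ ν : Measure Pt) : ℝ≥0∞ := ⨅ π ∈ Adm μ ν, CostInf π

/-- μ ∈ M^∞ : support at bounded distance from the diagonal. -/
def MemMinf (μ : Measure Pt) : Prop :=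
  μ UHPᶜ = 0 ∧ ∃ C : ℝ, ∀ x ∈ suppM μ, persDist x ≤ C

/-- A partial matching between two indexed families: a bijection between
subsets of the index sets; unmatched points are sent to the diagonal. -/
structure Matching (ι κ : Type*) where
  I : Set ι
  J : Set κ
  e : I ≃ J

/-- Cost of a partial matching for d_p (as the p-th power, extended real). -/
def mCost (p : ℝ) {ι κ : Type*} (x : ι → Pt) (y : κ → Pt) (m : Matching ι κ) : ℝ≥0∞ :=
  (∑' i : m.I, ENNReal.ofReal (dist (x i.1) (y (m.e i).1) ^ p))
  + (∑' i : ↥(m.Iᶜ), ENNReal.ofReal (persDist (x i.1) ^ p))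
  + (∑' j : ↥(m.Jᶜ), ENNReal.ofReal (persDist (y j.1) ^ p))

/-- Bottleneck cost of a partial matching. -/
def mCostInf {ι κ : Type*} (x : ι → Pt) (y : κ → Pt) (m : Matching ι κ) : ℝ≥0∞ :=
  (⨆ i : m.I, ENNReal.ofReal (dist (x i.1) (y (m.e i).1)))
  ⊔ (⨆ i : ↥(m.Iᶜ), ENNReal.ofReal (persDist (x i.1)))
  ⊔ (⨆ j : ↥(m.Jᶜ), ENNReal.ofReal (persDist (y j.1)))

/-- The point measure associated to an indexed family of points. -/
def famMeasure {ι : Type*} (x : ι → Pt) : Measure Pt :=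
  Measure.sum (fun i => Measure.dirac (x i))

/-- The weighted measure μ^p, with density d(x,∂Ω)^p with respect to μ. -/
def wgt (p : ℝ) (μ : Measure Pt) : Measure Pt :=
  μ.withDensity (fun x => ENNReal.ofReal (persDist x ^ p))

/-- The quotient space Ω̃ = Ω ⊔ {∂Ω}. -/
def Qt : Type := Option ↥UHP

/-- The quotient metric ρ on Ω̃. -/
def ρQ : Qt → Qt → ℝ
  | some x, some y => min (dist (x : Pt) (y : Pt)) (persDist x + persDist y)
  | some x, none => persDist x
  | none, some y => persDist y
  | none, none => 0

/-- The quotient metric ρ viewed on the plane, all diagonal points being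
identified. -/
def ρP (x y : Pt) : ℝ :=
  if x ∈ Diag then (if y ∈ Diag then 0 else persDist y)
  else if y ∈ Diag then persDist x
  else min (dist x y) (persDist x + persDist y)

/-- Couplings with full (equal-mass) marginals. -/
def Coup (μ ν : Measure Pt) : Set (Measure (Pt × Pt)) :=
  {π | π.map Prod.fst = μ ∧ π.map Prod.snd = ν}

/-- The p-Wasserstein distance (to the p) for the quotient metric ρ. -/
def WpE (p : ℝ) (μ ν : Measure Pt) : ℝ≥0∞ :=
  ⨅ π ∈ Coup μ ν, ∫⁻ z, ENNReal.ofReal (ρP z.1 z.2 ^ p) ∂π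



section Stmt1Aux

/-- Projection to the diagonal. -/
def projD (x : Pt) : Pt := ((x 0 + x 1) / 2) • mk2 1 1

lemma aux_cont0 : Continuous fun x : Pt => x 0 :=
  (EuclideanSpace.proj (0 : Fin 2) : EuclideanSpace ℝ (Fin 2) →L[ℝ] ℝ).continuous

lemma aux_cont1 : Continuous fun x : Pt => x 1 :=
  (EuclideanSpace.proj (1 : Fin 2) : EuclideanSpace ℝ (Fin 2) →L[ℝ] ℝ).continuous

lemma projD_mem (x : Pt) : projD x ∈ Diag := by
  show (projD x) 0 = (projD x) 1; rfl

lemma continuous_projD : Continuous projD :=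
  ((aux_cont0.add aux_cont1).div_const 2).smul continuous_const

lemma dist_coord (x y : Pt) :
    dist x y = Real.sqrt ((x 0 - y 0) ^ 2 + (x 1 - y 1) ^ 2) := by
  rw [EuclideanSpace.dist_eq, Fin.sum_univ_two]
  simp [Real.dist_eq, sq_abs]

lemma continuous_persDist : Continuous persDist := continuous_infDist_pt Diag

lemma dist_projD (x : Pt) : dist x (projD x) = persDist x := by
  refine le_antisymm ?_ (infDist_le_dist_of_mem (projD_mem x))
  have : Nonempty ↥(Diag : Set Pt) := ⟨⟨mk2 0 0, rfl⟩⟩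
  rw [persDist, infDist_eq_iInf]
  refine le_ciInf fun y => ?_
  have hy : (y : Pt) 0 = (y : Pt) 1 := y.2
  rw [dist_coord, dist_coord]
  have h0 : (projD x) 0 = (x 0 + x 1) / 2 := mul_one _
  have h1 : (projD x) 1 = (x 0 + x 1) / 2 := mul_one _
  rw [h0, h1]
  apply Real.sqrt_le_sqrt
  rw [← hy]
  nlinarith [sq_nonneg (x 0 + x 1 - 2 * (y : Pt) 0)]

lemma uhp_open : IsOpen UHP := isOpen_lt aux_cont0 aux_cont1

lemma diag_closed : IsClosed (Diag : Set Pt) := isClosed_eq aux_cont0 aux_cont1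

lemma diag_disjoint_uhp : ∀ x : Pt, x ∈ Diag → x ∉ UHP := by
  intro x hd hu
  have h1 : x 0 < x 1 := hu
  have h2 : x 0 = x 1 := hd
  linarith

end Stmt1Aux

/-- for μ ∈ M^p and r > 0, letting μ⁽ʳ⁾ be the restriction of μ to
the points at distance > r from the diagonal, OT_p(μ⁽ʳ⁾,μ)^p ≤ Pers_p(μ) − Pers_p(μ⁽ʳ⁾),
and OT_p(μ⁽ʳ⁾,μ) → 0 as r → 0⁺. -/
theorem stmt1 (p : ℝ) (hp : 1 ≤ p) (μ : Measure Pt) (hμ : MemMp p μ) :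
    (∀ r : ℝ, 0 < r →
      OTe p (μ.restrict {x | r < persDist x}) μ ≤
        Pers p μ - Pers p (μ.restrict {x | r < persDist x})) ∧
    Tendsto (fun r : ℝ => OTe p (μ.restrict {x | r < persDist x}) μ)
      (𝓝[>] (0 : ℝ)) (𝓝 0) := by
  obtain ⟨hμΩ, hμfin⟩ := hμ
  have hp0 : (0 : ℝ) < p := lt_of_lt_of_le one_pos hp
  set f : Pt → ℝ≥0∞ := fun x => ENNReal.ofReal (persDist x ^ p) with hfdef
  have hfmeas : Measurable f :=
    (ENNReal.continuous_ofReal.comp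
      ((Real.continuous_rpow_const hp0.le).comp continuous_persDist)).measurable
  have hUHP : MeasurableSet UHP := uhp_open.measurableSet
  have hDiag : MeasurableSet (Diag : Set Pt) := diag_closed.measurableSet
  have hUHPbar : MeasurableSet UHPbar := hUHP.union hDiag
  have hAm : ∀ r : ℝ, MeasurableSet {x : Pt | r < persDist x} := fun r =>
    (isOpen_lt continuous_const continuous_persDist).measurableSet
  have hSm : ∀ r : ℝ, MeasurableSet {x : Pt | persDist x ≤ r} := fun r =>
    (isClosed_le continuous_persDist continuous_const).measurableSet
  have hcompl : ∀ r : ℝ, {x : Pt | r < persDist x}ᶜ = {x : Pt | persDist x ≤ r} := by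
    intro r; ext x; simp [not_lt]
  set ν : Measure Pt := (μ.restrict UHP).withDensity f with hνdef
  have hνuniv : ν univ = Pers p μ := by
    rw [hνdef, withDensity_apply _ MeasurableSet.univ, Measure.restrict_univ]
    rfl
  -- splitting of the persistence
  have hsplit : ∀ r : ℝ, Pers p μ =
      Pers p (μ.restrict {x : Pt | r < persDist x}) + ν {x : Pt | persDist x ≤ r} := by
    intro r
    have h1 : Pers p (μ.restrict {x : Pt | r < persDist x})
        = ∫⁻ x in {x : Pt | r < persDist x}, f x ∂(μ.restrict UHP) := by
      show ∫⁻ x in UHP, f x ∂(μ.restrict {x : Pt | r < persDist x}) = _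
      rw [Measure.restrict_restrict hUHP, Measure.restrict_restrict (hAm r), Set.inter_comm]
    have h2 : ν {x : Pt | persDist x ≤ r}
        = ∫⁻ x in {x : Pt | r < persDist x}ᶜ, f x ∂(μ.restrict UHP) := by
      rw [hνdef, withDensity_apply _ (hSm r), hcompl r]
    have h3 : Pers p μ = ∫⁻ x, f x ∂(μ.restrict UHP) := rfl
    rw [h1, h2, h3, lintegral_add_compl f (hAm r)]
  -- the transport-plan bound
  have hle : ∀ r : ℝ,
      OTe p (μ.restrict {x : Pt | r < persDist x}) μ ≤ ν {x : Pt | persDist x ≤ r} := by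
    intro r
    set A : Set Pt := {x : Pt | r < persDist x} with hAdef
    have hA : MeasurableSet A := hAm r
    have hm1 : Measurable fun x : Pt => (x, x) := measurable_id.prodMk measurable_id
    have hm2 : Measurable fun x : Pt => (projD x, x) :=
      continuous_projD.measurable.prodMk measurable_id
    set π : Measure (Pt × Pt) :=
      (μ.restrict A).map (fun x => (x, x)) + (μ.restrict Aᶜ).map (fun x => (projD x, x))
      with hπdef
    have hrnull : ∀ s : Set Pt, μ.restrict s UHPᶜ = 0 := by
      intro s
      refine le_antisymm (le_trans (Measure.le_iff'.1 (Measure.restrict_le_self) _) ?_)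
        zero_le
      exact hμΩ.le
    have hπAdm : π ∈ Adm (μ.restrict A) μ := by
      refine ⟨?_, ?_, ?_⟩
      · have e1 : ((fun x : Pt => (x, x)) ⁻¹' (UHPbar ×ˢ UHPbar)ᶜ) ⊆ UHPᶜ := by
          intro x hx hxU
          exact hx ⟨Or.inl hxU, Or.inl hxU⟩
        have e2 : ((fun x : Pt => (projD x, x)) ⁻¹' (UHPbar ×ˢ UHPbar)ᶜ) ⊆ UHPᶜ := by
          intro x hx hxU
          exact hx ⟨Or.inr (projD_mem x), Or.inl hxU⟩
        rw [hπdef, Measure.add_apply,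
          Measure.map_apply hm1 (hUHPbar.prod hUHPbar).compl,
          Measure.map_apply hm2 (hUHPbar.prod hUHPbar).compl,
          measure_mono_null e1 (hrnull A), measure_mono_null e2 (hrnull Aᶜ), add_zero]
      · intro A' hA'm hA'sub
        have e1 : ((fun x : Pt => (x, x)) ⁻¹' (A' ×ˢ univ)) = A' := by
          ext x; simp
        have e2 : ((fun x : Pt => (projD x, x)) ⁻¹' (A' ×ˢ univ)) = ∅ := by
          ext x
          simp only [mem_preimage, mem_prod, mem_univ, and_true, mem_empty_iff_false,
            iff_false]
          exact fun h => diag_disjoint_uhp _ (projD_mem x) (hA'sub h)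
        rw [hπdef, Measure.add_apply,
          Measure.map_apply hm1 (hA'm.prod MeasurableSet.univ),
          Measure.map_apply hm2 (hA'm.prod MeasurableSet.univ), e1, e2, measure_empty,
          add_zero]
      · intro B hBm hBsub
        have e1 : ((fun x : Pt => (x, x)) ⁻¹' (univ ×ˢ B)) = B := by
          ext x; simp
        have e2 : ((fun x : Pt => (projD x, x)) ⁻¹' (univ ×ˢ B)) = B := by
          ext x; simp
        rw [hπdef, Measure.add_apply,
          Measure.map_apply hm1 (MeasurableSet.univ.prod hBm),
          Measure.map_apply hm2 (MeasurableSet.univ.prod hBm), e1, e2,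
          Measure.restrict_apply hBm, Measure.restrict_apply hBm, ← Set.diff_eq,
          measure_inter_add_diff B hA]
    have hg : Measurable fun z : Pt × Pt => ENNReal.ofReal (dist z.1 z.2 ^ p) :=
      (ENNReal.continuous_ofReal.comp
        ((Real.continuous_rpow_const hp0.le).comp
          (continuous_fst.dist continuous_snd))).measurable
    have hcost : Cost p π = ν {x : Pt | persDist x ≤ r} := by
      have c1 : Cost p π
          = ∫⁻ x, ENNReal.ofReal (dist x x ^ p) ∂(μ.restrict A)
            + ∫⁻ x, ENNReal.ofReal (dist (projD x) x ^ p) ∂(μ.restrict Aᶜ) := by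
        rw [Cost, hπdef, lintegral_add_measure, lintegral_map hg hm1, lintegral_map hg hm2]
      have c2 : ∫⁻ x, ENNReal.ofReal (dist x x ^ p) ∂(μ.restrict A) = 0 := by
        simp [Real.zero_rpow hp0.ne']
      have c3 : (fun x : Pt => ENNReal.ofReal (dist (projD x) x ^ p)) = f := by
        funext x
        rw [hfdef, dist_comm, dist_projD]
      have c4 : ∫⁻ x, f x ∂(μ.restrict Aᶜ) = ν {x : Pt | persDist x ≤ r} := by
        have hae : Aᶜ =ᵐ[μ] ((Aᶜ ∩ UHP : Set Pt)) := by
          have h1 : μ (Aᶜ \ (Aᶜ ∩ UHP)) = 0 := by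
            refine measure_mono_null (fun x hx => ?_) hμΩ
            exact fun hxU => hx.2 ⟨hx.1, hxU⟩
          have h2 : μ ((Aᶜ ∩ UHP) \ Aᶜ) = 0 :=
            measure_mono_null (fun x hx => (hx.2 hx.1.1).elim) measure_empty
          exact (MeasureTheory.ae_eq_set).2 ⟨h1, h2⟩
        calc ∫⁻ x, f x ∂(μ.restrict Aᶜ)
            = ∫⁻ x in Aᶜ, f x ∂μ := rfl
          _ = ∫⁻ x in Aᶜ ∩ UHP, f x ∂μ := setLIntegral_congr hae
          _ = ∫⁻ x in Aᶜ, f x ∂(μ.restrict UHP) := by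
              rw [Measure.restrict_restrict hA.compl]
          _ = ν {x : Pt | persDist x ≤ r} := by
              rw [hνdef, withDensity_apply _ (hSm r), hcompl r]
      rw [c1, c2, zero_add, c3, c4]
    calc OTe p (μ.restrict A) μ ≤ Cost p π := iInf₂_le π hπAdm
      _ = ν {x : Pt | persDist x ≤ r} := hcost
  -- part 1
  have part1 : ∀ r : ℝ, 0 < r →
      OTe p (μ.restrict {x : Pt | r < persDist x}) μ ≤
        Pers p μ - Pers p (μ.restrict {x : Pt | r < persDist x}) := by
    intro r _
    have hPfin : Pers p (μ.restrict {x : Pt | r < persDist x}) ≠ ⊤ := by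
      refine ne_top_of_le_ne_top hμfin.ne ?_
      rw [hsplit r]; exact le_self_add
    refine (hle r).trans (le_of_eq ?_)
    rw [hsplit r, ENNReal.add_sub_cancel_left hPfin]
  refine ⟨part1, ?_⟩
  -- part 2
  rw [ENNReal.tendsto_nhds_zero]
  intro ε hε
  set s : ℕ → Set Pt := fun n => {x : Pt | persDist x ≤ 1 / (n + 1)} with hsdef
  have hanti : Antitone s := by
    intro m n hmn x hx
    simp only [hsdef, mem_setOf_eq] at hx ⊢
    refine hx.trans (one_div_le_one_div_of_le (by positivity) ?_)
    have := (Nat.cast_le (α := ℝ)).2 hmn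
    linarith
  have hInter : (⋂ n, s n) = {x : Pt | persDist x ≤ 0} := by
    ext x
    simp only [mem_iInter, hsdef, mem_setOf_eq]
    constructor
    · intro h
      by_contra hlt
      push_neg at hlt
      obtain ⟨n, hn⟩ := exists_nat_one_div_lt hlt
      exact absurd (h n) (not_le.2 hn)
    · intro h n
      refine h.trans ?_
      positivity
  have hzero : ν {x : Pt | persDist x ≤ 0} = 0 := by
    rw [hνdef, withDensity_apply _ (hSm 0)]
    have hc : ∀ᵐ x ∂(μ.restrict UHP), x ∈ {x : Pt | persDist x ≤ 0} →
        f x = (fun _ : Pt => (0 : ℝ≥0∞)) x := by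
      refine ae_of_all _ fun x hx => ?_
      have hx0 : persDist x = 0 := le_antisymm hx infDist_nonneg
      rw [hfdef]
      simp [hx0, Real.zero_rpow hp0.ne']
    rw [setLIntegral_congr_fun_ae (hSm 0) hc]
    simp
  have hνfin : ν univ ≠ ⊤ := by rw [hνuniv]; exact hμfin.ne
  have htend : Tendsto (fun n => ν (s n)) atTop (𝓝 0) := by
    have := tendsto_measure_iInter_atTop (μ := ν)
      (fun n => ((hSm _).nullMeasurableSet)) hanti
      ⟨0, ne_top_of_le_ne_top hνfin (measure_mono (subset_univ _))⟩
    rw [hInter, hzero] at this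
    exact this
  obtain ⟨N, hN⟩ := (ENNReal.tendsto_nhds_zero.1 htend ε hε).exists
  have hmemIoo : Ioo (0 : ℝ) (1 / (N + 1)) ∈ 𝓝[>] (0 : ℝ) := by
    apply Ioo_mem_nhdsGT_of_mem
    constructor
    · exact le_refl 0
    · positivity
  filter_upwards [hmemIoo] with r hr
  refine (hle r).trans (le_trans ?_ hN)
  exact measure_mono (fun x hx => le_trans hx hr.2.le)
end
end

section
/- The set D^p of persistence diagrams with finite p-th persistence is closed in (M^p, OT_p). -/
noncomputable section

open MeasureTheory Metric Set Filter Topology ENNReal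
open scoped Classical

section Aux

lemma uhp_meas : MeasurableSet UHP := uhp_open.measurableSet

lemma uhp_nonempty : UHP.Nonempty := by
  refine ⟨(WithLp.equiv 2 (Fin 2 → ℝ)).symm ![0, 1], ?_⟩
  show ((WithLp.equiv 2 (Fin 2 → ℝ)).symm ![0, 1]) 0 < _
  simp

lemma cost_meas {p : ℝ} (hp : 0 ≤ p) :
    Measurable fun z : Pt × Pt => ENNReal.ofReal (dist z.1 z.2 ^ p) :=
  ((continuous_fst.dist continuous_snd).rpow_const (fun _ => Or.inr hp)).measurable.ennreal_ofReal

-- key estimate: mass in a small ball is controlled via a plan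
lemma mass_est {p : ℝ} (hp : 1 ≤ p) (π : Measure (Pt × Pt)) (μ₁ μ₂ : Measure Pt)
    (h1 : ∀ A : Set Pt, MeasurableSet A → A ⊆ UHP → π (A ×ˢ univ) = μ₁ A)
    (h2 : ∀ B : Set Pt, MeasurableSet B → B ⊆ UHP → π (univ ×ˢ B) = μ₂ B)
    (x : Pt) (r δ : ℝ) (hr : 0 ≤ r) (hδ : 0 < δ)
    (hsub : closedBall x (r + δ) ⊆ UHP) :
    μ₁ (closedBall x r) ≤ μ₂ (closedBall x (r + δ)) + Cost p π / ENNReal.ofReal (δ ^ p) := by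
  have hp0 : (0:ℝ) ≤ p := le_trans zero_le_one hp
  have hdp : 0 < δ ^ p := Real.rpow_pos_of_pos hδ p
  have hKsub : closedBall x r ⊆ UHP :=
    (closedBall_subset_closedBall (by linarith)).trans hsub
  set K := closedBall x r
  set B := closedBall x (r + δ)
  set S := K ×ˢ Bᶜ with hS
  have hSm : MeasurableSet S :=
    measurableSet_closedBall.prod measurableSet_closedBall.compl
  -- π S ≤ Cost / δ^p
  have hdistS : ∀ z ∈ S, ENNReal.ofReal (δ ^ p) ≤ ENNReal.ofReal (dist z.1 z.2 ^ p) := by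
    rintro ⟨z1, z2⟩ ⟨hz1, hz2⟩
    have h1' : dist z1 x ≤ r := mem_closedBall.mp hz1
    have h2' : ¬ dist z2 x ≤ r + δ := fun h => hz2 (mem_closedBall.mpr h)
    have : δ ≤ dist z1 z2 := by
      have := dist_triangle z2 z1 x
      have hd : dist z1 z2 = dist z2 z1 := dist_comm _ _
      push_neg at h2'
      linarith
    exact ENNReal.ofReal_le_ofReal (Real.rpow_le_rpow hδ.le this hp0)
  have hπS : π S ≤ Cost p π / ENNReal.ofReal (δ ^ p) := by
    rw [ENNReal.le_div_iff_mul_le (Or.inl (by simp [hdp])) (Or.inl (by simp))]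
    calc π S * ENNReal.ofReal (δ ^ p)
        = ∫⁻ _ in S, ENNReal.ofReal (δ ^ p) ∂π := by
          rw [setLIntegral_const, mul_comm]
      _ ≤ ∫⁻ z in S, ENNReal.ofReal (dist z.1 z.2 ^ p) ∂π :=
          setLIntegral_mono (cost_meas hp0) hdistS
      _ ≤ Cost p π := setLIntegral_le_lintegral _ _
  have hsplit : π (K ×ˢ univ) ≤ π (univ ×ˢ B) + π S := by
    refine le_trans (measure_mono ?_) (measure_union_le _ _)
    rintro ⟨z1, z2⟩ ⟨hz1, -⟩
    by_cases h : z2 ∈ B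
    · exact Or.inl ⟨trivial, h⟩
    · exact Or.inr ⟨hz1, h⟩
  calc μ₁ K = π (K ×ˢ univ) := (h1 K measurableSet_closedBall hKsub).symm
    _ ≤ π (univ ×ˢ B) + π S := hsplit
    _ = μ₂ B + π S := by rw [h2 B measurableSet_closedBall hsub]
    _ ≤ μ₂ B + Cost p π / ENNReal.ofReal (δ ^ p) := add_le_add_right hπS _

lemma mass_est' {p : ℝ} (hp : 1 ≤ p) (π : Measure (Pt × Pt)) (μ₁ μ₂ : Measure Pt)
    (h1 : ∀ A : Set Pt, MeasurableSet A → A ⊆ UHP → π (A ×ˢ univ) = μ₁ A)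
    (h2 : ∀ B : Set Pt, MeasurableSet B → B ⊆ UHP → π (univ ×ˢ B) = μ₂ B)
    (x : Pt) (r δ : ℝ) (hr : 0 ≤ r) (hδ : 0 < δ)
    (hsub : closedBall x (r + δ) ⊆ UHP) :
    μ₂ (closedBall x r) ≤ μ₁ (closedBall x (r + δ)) + Cost p π / ENNReal.ofReal (δ ^ p) := by
  have hp0 : (0:ℝ) ≤ p := le_trans zero_le_one hp
  have hdp : 0 < δ ^ p := Real.rpow_pos_of_pos hδ p
  have hKsub : closedBall x r ⊆ UHP :=
    (closedBall_subset_closedBall (by linarith)).trans hsub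
  set K := closedBall x r
  set B := closedBall x (r + δ)
  set S := Bᶜ ×ˢ K with hS
  have hSm : MeasurableSet S :=
    measurableSet_closedBall.compl.prod measurableSet_closedBall
  have hdistS : ∀ z ∈ S, ENNReal.ofReal (δ ^ p) ≤ ENNReal.ofReal (dist z.1 z.2 ^ p) := by
    rintro ⟨z1, z2⟩ ⟨hz1, hz2⟩
    have h1' : dist z2 x ≤ r := mem_closedBall.mp hz2
    have h2' : ¬ dist z1 x ≤ r + δ := fun h => hz1 (mem_closedBall.mpr h)
    have : δ ≤ dist z1 z2 := by
      have := dist_triangle z1 z2 x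
      push_neg at h2'
      linarith
    exact ENNReal.ofReal_le_ofReal (Real.rpow_le_rpow hδ.le this hp0)
  have hπS : π S ≤ Cost p π / ENNReal.ofReal (δ ^ p) := by
    rw [ENNReal.le_div_iff_mul_le (Or.inl (by simp [hdp])) (Or.inl (by simp))]
    calc π S * ENNReal.ofReal (δ ^ p)
        = ∫⁻ _ in S, ENNReal.ofReal (δ ^ p) ∂π := by
          rw [setLIntegral_const, mul_comm]
      _ ≤ ∫⁻ z in S, ENNReal.ofReal (dist z.1 z.2 ^ p) ∂π :=
          setLIntegral_mono (cost_meas hp0) hdistS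
      _ ≤ Cost p π := setLIntegral_le_lintegral _ _
  have hsplit : π (univ ×ˢ K) ≤ π (B ×ˢ univ) + π S := by
    refine le_trans (measure_mono ?_) (measure_union_le _ _)
    rintro ⟨z1, z2⟩ ⟨-, hz2⟩
    by_cases h : z1 ∈ B
    · exact Or.inl ⟨h, trivial⟩
    · exact Or.inr ⟨h, hz2⟩
  calc μ₂ K = π (univ ×ˢ K) := (h2 K measurableSet_closedBall hKsub).symm
    _ ≤ π (B ×ˢ univ) + π S := hsplit
    _ = μ₁ B + π S := by rw [h1 B measurableSet_closedBall hsub]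
    _ ≤ μ₁ B + Cost p π / ENNReal.ofReal (δ ^ p) := add_le_add_right hπS _

lemma diagram_nat {ν : Measure Pt} (hν : IsDiagram ν) {K : Set Pt}
    (hK : IsCompact K) (hKm : MeasurableSet K) (hKU : K ⊆ UHP) :
    ∃ m : ℕ, ν K = m := by
  obtain ⟨X, n, hXU, hloc, rfl⟩ := hν
  -- X ∩ K is finite
  have hfin : (X ∩ K).Finite := by
    have hcov : ∀ y ∈ K, ∃ U ∈ 𝓝 y, (X ∩ U).Finite := fun y hy => hloc y (hKU hy)
    choose U hU hUf using hcov
    obtain ⟨t, hcover⟩ := hK.elim_nhds_subcover' (fun y hy => U y hy) (fun y hy => hU y hy)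
    have : X ∩ K ⊆ ⋃ y ∈ t, (X ∩ U y y.2) := by
      intro z hz
      obtain ⟨y, hy, hzy⟩ := mem_iUnion₂.mp (hcover hz.2)
      exact mem_iUnion₂.mpr ⟨y, hy, hz.1, hzy⟩
    exact (Set.Finite.biUnion t.finite_toSet (fun y _ => hUf y y.2)).subset this
  have hfin' : {i : X | (i : Pt) ∈ K}.Finite := by
    have : Set.InjOn (Subtype.val : X → Pt) {i : X | (i : Pt) ∈ K} := Subtype.val_injective.injOn
    refine Set.Finite.of_finite_image ?_ this
    refine hfin.subset ?_
    rintro z ⟨i, hi, rfl⟩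
    exact ⟨i.2, hi⟩
  classical
  set s : Finset X := hfin'.toFinset
  have hval : ∀ i : X, ((n i.1 : ℝ≥0∞) • Measure.dirac (i.1 : Pt)) K
      = if (i : Pt) ∈ K then (n i.1 : ℝ≥0∞) else 0 := by
    intro i
    rw [Measure.smul_apply, smul_eq_mul, Measure.dirac_apply' _ hKm]
    by_cases h : (i : Pt) ∈ K <;> simp [h]
  rw [Measure.sum_apply _ hKm]
  have : (∑' i : X, ((n i.1 : ℝ≥0∞) • Measure.dirac (i.1 : Pt)) K)
      = ∑ i ∈ s, ((n i.1 : ℝ≥0∞) • Measure.dirac (i.1 : Pt)) K := by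
    refine tsum_eq_sum ?_
    intro i hi
    rw [hval i, if_neg]
    intro h
    exact hi (hfin'.mem_toFinset.mpr h)
  rw [this]
  refine ⟨∑ i ∈ s, n i.1, ?_⟩
  rw [Nat.cast_sum]
  refine Finset.sum_congr rfl ?_
  intro i hi
  rw [hval i, if_pos (show (i:Pt) ∈ K from hfin'.mem_toFinset.mp hi)]

lemma exists_sphere_null (μ : Measure Pt) (x : Pt) {a b R : ℝ} (hab : a < b) (hbR : b ≤ R)
    (hfin : μ (closedBall x R) ≠ ⊤) :
    ∃ r, a < r ∧ r < b ∧ μ (sphere x r) = 0 := by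
  set μ' := μ.restrict (closedBall x R) with hμ'
  have : IsFiniteMeasure μ' := by
    constructor
    rw [Measure.restrict_apply_univ]
    exact hfin.lt_top
  have hcnt : Set.Countable {r : ℝ | 0 < μ' (sphere x r)} := by
    refine Measure.countable_meas_pos_of_disjoint_iUnion (As := fun r : ℝ => sphere x r)
      (fun r => isClosed_sphere.measurableSet) ?_
    intro r s hrs
    simp only [Function.onFun]
    apply Set.disjoint_left.mpr
    intro z hz hz'
    exact hrs (by rw [← mem_sphere.mp hz, ← mem_sphere.mp hz'])
  by_contra hcon
  push_neg at hcon
  have hsub : Set.Ioo a b ⊆ {r : ℝ | 0 < μ' (sphere x r)} := by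
    intro r hr
    have hne : μ (sphere x r) ≠ 0 := hcon r hr.1 hr.2
    have heq : μ' (sphere x r) = μ (sphere x r) := by
      rw [hμ', Measure.restrict_apply isClosed_sphere.measurableSet,
        Set.inter_eq_left.mpr]
      intro z hz
      rw [mem_closedBall, mem_sphere.mp hz]
      exact le_trans hr.2.le hbR
    rw [mem_setOf_eq, heq]
    exact pos_iff_ne_zero.mpr hne
  have : (Set.Ioo a b).Countable := hcnt.mono hsub
  rw [← Cardinal.le_aleph0_iff_set_countable, Cardinal.mk_Ioo_real hab] at this
  exact (not_le.mpr Cardinal.aleph0_lt_continuum) this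

lemma natcast_of_approx {L : ℝ≥0∞} (hL : L ≠ ⊤)
    (h : ∀ ε : ℝ, 0 < ε → ∃ m : ℕ, (m : ℝ≥0∞) ≤ L + ENNReal.ofReal ε ∧
      L ≤ (m : ℝ≥0∞) + ENNReal.ofReal ε) :
    ∃ m : ℕ, L = m := by
  set l := L.toReal with hl
  have hmem : l ∈ closure (Set.range ((↑) : ℕ → ℝ)) := by
    rw [Metric.mem_closure_iff]
    intro ε hε
    obtain ⟨m, h1, h2⟩ := h (ε/2) (by linarith)
    refine ⟨(m : ℝ), ⟨m, rfl⟩, ?_⟩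
    have hfin1 : L + ENNReal.ofReal (ε/2) ≠ ⊤ := by
      exact ENNReal.add_ne_top.mpr ⟨hL, ENNReal.ofReal_ne_top⟩
    have e1 : (m : ℝ) ≤ l + ε/2 := by
      have := ENNReal.toReal_mono hfin1 h1
      rwa [ENNReal.toReal_natCast, ENNReal.toReal_add hL ENNReal.ofReal_ne_top,
        ENNReal.toReal_ofReal (by linarith)] at this
    have e2 : l ≤ (m : ℝ) + ε/2 := by
      have := ENNReal.toReal_mono (by simp) h2
      rwa [ENNReal.toReal_add (by simp) ENNReal.ofReal_ne_top, ENNReal.toReal_natCast,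
        ENNReal.toReal_ofReal (by linarith)] at this
    rw [Real.dist_eq, abs_sub_lt_iff]
    constructor <;> linarith
  rw [Nat.isClosedEmbedding_coe_real.isClosed_range.closure_eq] at hmem
  obtain ⟨m, hm⟩ := hmem
  refine ⟨m, ?_⟩
  rw [← ENNReal.ofReal_toReal hL, ← hl, ← hm, ENNReal.ofReal_natCast]

/-- abstract form of availability of cheap plans -/
def CheapPlans (p : ℝ) (μ : Measure Pt) : Prop :=
  ∀ η : ℝ≥0∞, 0 < η → ∃ (ν : Measure Pt) (π : Measure (Pt × Pt)), IsDiagram ν ∧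
    (∀ A : Set Pt, MeasurableSet A → A ⊆ UHP → π (A ×ˢ univ) = ν A) ∧
    (∀ B : Set Pt, MeasurableSet B → B ⊆ UHP → π (univ ×ˢ B) = μ B) ∧
    Cost p π < η

section Main
variable {p : ℝ} {μ : Measure Pt}

lemma ball_fin (hp : 1 ≤ p) (hcp : CheapPlans p μ) {x : Pt} {R : ℝ}
    (hR : closedBall x R ⊆ UHP) {r : ℝ} (hr0 : 0 ≤ r) (hrR : r < R) :
    μ (closedBall x r) ≠ ⊤ := by
  obtain ⟨ν, π, hν, h1, h2, hc⟩ := hcp 1 zero_lt_one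
  have hδ : 0 < R - r := by linarith
  have key := mass_est' hp π ν μ h1 h2 x r (R - r) hr0 hδ (by
    rw [show r + (R - r) = R by ring]; exact hR)
  rw [show r + (R - r) = R by ring] at key
  obtain ⟨m, hm⟩ := diagram_nat hν (isCompact_closedBall x R) measurableSet_closedBall hR
  rw [hm] at key
  refine ne_top_of_le_ne_top ?_ key
  refine ENNReal.add_ne_top.mpr ⟨by simp, ?_⟩
  exact (ENNReal.div_lt_top (hc.trans_le le_top).ne
    (by simp only [ne_eq, ENNReal.ofReal_eq_zero, not_le]; exact Real.rpow_pos_of_pos hδ p)).ne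

lemma ball_nat (hp : 1 ≤ p) (hcp : CheapPlans p μ) {x : Pt} {R : ℝ}
    (hR : closedBall x R ⊆ UHP) {r : ℝ} (hr0 : 0 < r) (hrR : r < R)
    (hsph : μ (sphere x r) = 0) :
    ∃ m : ℕ, μ (closedBall x r) = m := by
  have hp0 : (0:ℝ) ≤ p := le_trans zero_le_one hp
  set L := μ (closedBall x r) with hLdef
  have hLfin : L ≠ ⊤ := ball_fin hp hcp hR hr0.le hrR
  -- measure of the open ball equals L
  have hopen : μ (ball x r) = L := by
    refine le_antisymm (measure_mono ball_subset_closedBall) ?_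
    calc L ≤ μ (ball x r ∪ sphere x r) := by
          refine measure_mono ?_
          intro z hz
          rcases lt_or_eq_of_le (mem_closedBall.mp hz) with h | h
          · exact Or.inl (mem_ball.mpr h)
          · exact Or.inr (mem_sphere.mpr h)
      _ ≤ μ (ball x r) + μ (sphere x r) := measure_union_le _ _
      _ = μ (ball x r) := by rw [hsph, add_zero]
  refine natcast_of_approx hLfin ?_
  intro ε hε
  have hε2 : (0:ℝ) < ε/2 := by linarith
  have hε2' : (0:ℝ≥0∞) < ENNReal.ofReal (ε/2) := ENNReal.ofReal_pos.mpr hε2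
  -- (a) find δ₁ ∈ (0, R - r) with μ (closedBall x (r+δ₁)) < L + ofReal (ε/2)
  have ha : ∃ δ₁ : ℝ, 0 < δ₁ ∧ δ₁ < R - r ∧
      μ (closedBall x (r + δ₁)) < L + ENNReal.ofReal (ε/2) := by
    have hmono : Antitone (fun k : ℕ => closedBall x (r + (R - r)/(k+2))) := by
      intro k l hkl
      apply closedBall_subset_closedBall
      have hk2 : (0:ℝ) < (k:ℝ)+2 := by positivity
      have hl2 : (0:ℝ) < (l:ℝ)+2 := by positivity
      have : (R - r)/(l+2) ≤ (R - r)/(k+2) := by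
        apply div_le_div_of_nonneg_left (by linarith) hk2
        exact_mod_cast by exact_mod_cast (by exact_mod_cast Nat.add_le_add_right hkl 2 : ((k+2:ℕ):ℝ) ≤ ((l+2:ℕ):ℝ))
      linarith
    have hinter : (⋂ k : ℕ, closedBall x (r + (R - r)/(k+2))) = closedBall x r := by
      apply Set.Subset.antisymm
      · intro z hz
        rw [mem_closedBall]
        by_contra hcon
        push_neg at hcon
        obtain ⟨k, hk⟩ := exists_nat_gt ((R - r)/(dist z x - r))
        have hz' := mem_iInter.mp hz k
        rw [mem_closedBall] at hz'
        have hd : 0 < dist z x - r := by linarith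
        have hk2 : (0:ℝ) < (k:ℝ)+2 := by positivity
        have : (R - r)/(k+2) < dist z x - r := by
          rw [div_lt_iff₀ hk2]
          have h1 : (R - r)/(dist z x - r) < k + 2 := by linarith
          calc R - r = ((R - r)/(dist z x - r)) * (dist z x - r) := by
                field_simp
            _ < (k+2) * (dist z x - r) := by
                apply mul_lt_mul_of_pos_right h1 hd
            _ = (dist z x - r) * (k+2) := by ring
        linarith
      · intro z hz
        apply mem_iInter.mpr
        intro k
        apply closedBall_subset_closedBall _ hz
        have hk2 : (0:ℝ) < (k:ℝ)+2 := by positivity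
        have : 0 ≤ (R - r)/(k+2) := by
          apply div_nonneg (by linarith) hk2.le
        linarith
    have htend := tendsto_measure_iInter_atTop (μ := μ)
      (fun k => measurableSet_closedBall.nullMeasurableSet) hmono
      ⟨0, by
        have hRr : (0:ℝ) < R - r := sub_pos.mpr hrR
        have h02 : ((0:ℕ):ℝ) + 2 = 2 := by norm_num
        apply ball_fin hp hcp hR
        · rw [h02]; linarith
        · rw [h02]; linarith⟩
    rw [hinter] at htend
    have hlt : L < L + ENNReal.ofReal (ε/2) :=
      ENNReal.lt_add_right hLfin (ENNReal.ofReal_pos.mpr hε2).ne'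
    obtain ⟨k, hk⟩ := (htend.eventually_lt_const hlt).exists
    refine ⟨(R - r)/(k+2), by have := sub_pos.mpr hrR; positivity, ?_, hk⟩
    rw [div_lt_iff₀ (by positivity)]
    nlinarith [sub_pos.mpr hrR, (by positivity : (0:ℝ) < (k:ℝ)+1)]
  -- (b) find δ₂ ∈ (0, r) with L ≤ μ (closedBall x (r - δ₂)) + ofReal (ε/2)
  have hb : ∃ δ₂ : ℝ, 0 < δ₂ ∧ δ₂ < r ∧
      L ≤ μ (closedBall x (r - δ₂)) + ENNReal.ofReal (ε/2) := by
    rcases le_or_gt L (ENNReal.ofReal (ε/2)) with hcase | hcase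
    · exact ⟨r/2, by positivity, by linarith, le_trans hcase (le_add_self)⟩
    · have hmono : Monotone (fun k : ℕ => closedBall x (r - r/(k+2))) := by
        intro k l hkl
        apply closedBall_subset_closedBall
        have hk2 : (0:ℝ) < (k:ℝ)+2 := by positivity
        have hl2 : (0:ℝ) < (l:ℝ)+2 := by positivity
        have : r/(l+2) ≤ r/(k+2) := by
          apply div_le_div_of_nonneg_left hr0.le hk2
          exact_mod_cast (by exact_mod_cast Nat.add_le_add_right hkl 2 : ((k+2:ℕ):ℝ) ≤ ((l+2:ℕ):ℝ))
        linarith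
      have hunion : (⋃ k : ℕ, closedBall x (r - r/(k+2))) = ball x r := by
        apply Set.Subset.antisymm
        · refine Set.iUnion_subset ?_
          intro k
          apply closedBall_subset_ball
          have hk2 : (0:ℝ) < (k:ℝ)+2 := by positivity
          have : 0 < r/(k+2) := by positivity
          linarith
        · intro z hz
          rw [mem_ball] at hz
          have hd : 0 < r - dist z x := by linarith
          obtain ⟨k, hk⟩ := exists_nat_gt (r/(r - dist z x))
          refine mem_iUnion.mpr ⟨k, ?_⟩
          rw [mem_closedBall]
          have hk2 : (0:ℝ) < (k:ℝ)+2 := by positivity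
          have : r/(k+2) < r - dist z x := by
            rw [div_lt_iff₀ hk2]
            have h1 : r/(r - dist z x) < k + 2 := by linarith
            calc r = (r/(r - dist z x)) * (r - dist z x) := by field_simp
              _ < (k+2) * (r - dist z x) := mul_lt_mul_of_pos_right h1 hd
              _ = (r - dist z x) * (k+2) := by ring
          linarith
      have htend := tendsto_measure_iUnion_atTop (μ := μ) hmono
      rw [hunion, hopen] at htend
      have hsub' : L - ENNReal.ofReal (ε/2) < L :=
        ENNReal.sub_lt_self hLfin (by
          intro h0
          rw [h0] at hcase
          exact (not_lt.mpr zero_le) hcase) hε2'.ne'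
      obtain ⟨k, hk⟩ := (htend.eventually_const_lt hsub').exists
      refine ⟨r/((k:ℝ)+2), by positivity, ?_, ?_⟩
      · rw [div_lt_iff₀ (by positivity)]
        nlinarith [(by positivity : (0:ℝ) < (k:ℝ)+1)]
      · have : L = (L - ENNReal.ofReal (ε/2)) + ENNReal.ofReal (ε/2) :=
          (tsub_add_cancel_of_le hcase.le).symm
        rw [this]
        exact add_le_add_left hk.le _
  obtain ⟨δ₁, hδ₁0, hδ₁R, hδ₁⟩ := ha
  obtain ⟨δ₂, hδ₂0, hδ₂r, hδ₂⟩ := hb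
  set δ := min δ₁ δ₂ with hδdef
  have hδ0 : 0 < δ := lt_min hδ₁0 hδ₂0
  have hδp : 0 < δ ^ p := Real.rpow_pos_of_pos hδ0 p
  -- get a cheap plan
  obtain ⟨ν, π, hν, h1, h2, hc⟩ := hcp (ENNReal.ofReal (ε/2) * ENNReal.ofReal (δ ^ p))
    (ENNReal.mul_pos hε2'.ne' (ENNReal.ofReal_pos.mpr hδp).ne')
  have hcd : Cost p π / ENNReal.ofReal (δ ^ p) ≤ ENNReal.ofReal (ε/2) :=
    ENNReal.div_le_of_le_mul hc.le
  -- the natural value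
  have hsubr : closedBall x r ⊆ UHP :=
    (closedBall_subset_closedBall (by linarith)).trans hR
  obtain ⟨m, hm⟩ := diagram_nat hν (isCompact_closedBall x r) measurableSet_closedBall hsubr
  refine ⟨m, ?_, ?_⟩
  · -- m ≤ L + ε
    have key := mass_est hp π ν μ h1 h2 x r δ hr0.le hδ0 (by
      refine (closedBall_subset_closedBall ?_).trans hR
      have := min_le_left δ₁ δ₂
      linarith)
    rw [hm] at key
    have h2' : μ (closedBall x (r + δ)) ≤ μ (closedBall x (r + δ₁)) := by
      apply measure_mono
      apply closedBall_subset_closedBall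
      have := min_le_left δ₁ δ₂
      linarith
    calc (m : ℝ≥0∞) ≤ μ (closedBall x (r + δ)) + Cost p π / ENNReal.ofReal (δ ^ p) := key
      _ ≤ μ (closedBall x (r + δ₁)) + ENNReal.ofReal (ε/2) := add_le_add h2' hcd
      _ ≤ (L + ENNReal.ofReal (ε/2)) + ENNReal.ofReal (ε/2) := add_le_add_left hδ₁.le _
      _ ≤ L + ENNReal.ofReal ε := by
          rw [add_assoc, ← ENNReal.ofReal_add (by linarith) (by linarith)]
          rw [show ε/2 + ε/2 = ε by ring]
    -- done
  · -- L ≤ m + ε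
    have key := mass_est' hp π ν μ h1 h2 x (r - δ) δ (by
        have := min_le_right δ₁ δ₂
        linarith) hδ0 (by
      rw [show r - δ + δ = r by ring]
      exact hsubr)
    rw [show r - δ + δ = r by ring, hm] at key
    have h2' : μ (closedBall x (r - δ₂)) ≤ μ (closedBall x (r - δ)) := by
      apply measure_mono
      apply closedBall_subset_closedBall
      have := min_le_right δ₁ δ₂
      linarith
    calc L ≤ μ (closedBall x (r - δ₂)) + ENNReal.ofReal (ε/2) := hδ₂
      _ ≤ μ (closedBall x (r - δ)) + ENNReal.ofReal (ε/2) := add_le_add_left h2' _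
      _ ≤ ((m : ℝ≥0∞) + Cost p π / ENNReal.ofReal (δ ^ p)) + ENNReal.ofReal (ε/2) :=
          add_le_add_left key _
      _ ≤ ((m : ℝ≥0∞) + ENNReal.ofReal (ε/2)) + ENNReal.ofReal (ε/2) :=
          add_le_add_left (add_le_add_right hcd _) _
      _ ≤ (m : ℝ≥0∞) + ENNReal.ofReal ε := by
          rw [add_assoc, ← ENNReal.ofReal_add (by linarith) (by linarith)]
          rw [show ε/2 + ε/2 = ε by ring]

lemma atom_ball (hp : 1 ≤ p) (hcp : CheapPlans p μ) {x : Pt} (hx : x ∈ UHP) :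
    ∃ (m : ℕ) (r : ℝ), 0 < r ∧ closedBall x r ⊆ UHP ∧ μ {x} = m ∧
      μ (closedBall x r) = m := by
  obtain ⟨ε, hε0, hεsub⟩ := Metric.isOpen_iff.mp uhp_open x hx
  set R := ε/2 with hRdef
  have hR0 : 0 < R := by positivity
  have hRsub : closedBall x R ⊆ UHP :=
    (closedBall_subset_ball (by rw [hRdef]; linarith)).trans hεsub
  set P : ℕ → Prop := fun m => ∃ r, 0 < r ∧ r < R ∧ μ (sphere x r) = 0 ∧
    μ (closedBall x r) = m with hPdef
  have hex : ∃ m, P m := by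
    have hfin : μ (closedBall x (R/2)) ≠ ⊤ := ball_fin hp hcp hRsub (by positivity) (by linarith)
    obtain ⟨r, hr1, hr2, hrsph⟩ := exists_sphere_null μ x (a := R/4) (b := R/2)
      (by linarith) (le_refl _) hfin
    have hr0 : 0 < r := lt_trans (by positivity) hr1
    obtain ⟨m, hm⟩ := ball_nat hp hcp hRsub hr0 (by linarith) hrsph
    exact ⟨m, r, hr0, by linarith, hrsph, hm⟩
  set m₀ := Nat.find hex with hm₀def
  obtain ⟨r₀, hr₀0, hr₀R, hsph₀, hball₀⟩ := Nat.find_spec hex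
  have hsub₀ : closedBall x r₀ ⊆ UHP :=
    (closedBall_subset_closedBall (by linarith)).trans hRsub
  have hle : μ {x} ≤ (m₀ : ℝ≥0∞) := by
    rw [← hball₀]
    exact measure_mono (singleton_subset_iff.mpr (mem_closedBall_self hr₀0.le))
  have hge : (m₀ : ℝ≥0∞) ≤ μ {x} := by
    by_contra hcon
    push_neg at hcon
    -- continuity from above at the point x
    have hmono : Antitone (fun k : ℕ => closedBall x (r₀/(k+2))) := by
      intro k l hkl
      apply closedBall_subset_closedBall
      apply div_le_div_of_nonneg_left hr₀0.le (by positivity)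
      exact_mod_cast (by exact_mod_cast Nat.add_le_add_right hkl 2 : ((k+2:ℕ):ℝ) ≤ ((l+2:ℕ):ℝ))
    have hinter : (⋂ k : ℕ, closedBall x (r₀/(k+2))) = {x} := by
      apply Set.Subset.antisymm
      · intro z hz
        have hdist : ∀ k : ℕ, dist z x ≤ r₀/(k+2) := fun k =>
          mem_closedBall.mp (mem_iInter.mp hz k)
        have hzero : dist z x ≤ 0 := by
          by_contra hpos
          push_neg at hpos
          obtain ⟨k, hk⟩ := exists_nat_gt (r₀ / dist z x)
          have hk2 : (0:ℝ) < (k:ℝ)+2 := by positivity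
          have : r₀/((k:ℝ)+2) < dist z x := by
            rw [div_lt_iff₀ hk2]
            calc r₀ = (r₀ / dist z x) * dist z x := by field_simp
              _ < ((k:ℝ)+2) * dist z x := by
                  apply mul_lt_mul_of_pos_right (by linarith) hpos
              _ = dist z x * ((k:ℝ)+2) := by ring
          exact absurd (hdist k) (not_le.mpr this)
        exact mem_singleton_iff.mpr (eq_of_dist_eq_zero (le_antisymm hzero dist_nonneg))
      · intro z hz
        rw [mem_singleton_iff] at hz
        subst hz
        exact mem_iInter.mpr fun k => mem_closedBall_self (by positivity)
    have htend := tendsto_measure_iInter_atTop (μ := μ)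
      (fun k => measurableSet_closedBall.nullMeasurableSet) hmono
      ⟨0, by
        apply ball_fin hp hcp hRsub (by positivity)
        have h02 : ((0:ℕ):ℝ) + 2 = 2 := by norm_num
        rw [h02]
        linarith⟩
    rw [hinter] at htend
    obtain ⟨k, hk⟩ := (htend.eventually_lt_const hcon).exists
    set ρ := r₀/((k:ℝ)+2) with hρdef
    have hρ0 : 0 < ρ := by positivity
    obtain ⟨r', hr'1, hr'2, hr'sph⟩ := exists_sphere_null μ x (a := ρ/2) (b := ρ)
      (by linarith) (le_refl _) hk.ne_top
    have hr'0 : 0 < r' := lt_trans (by positivity) hr'1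
    have hρle : ρ ≤ r₀/2 := by
      rw [hρdef]
      apply div_le_div_of_nonneg_left hr₀0.le (by norm_num)
      linarith [Nat.cast_nonneg (α := ℝ) k]
    obtain ⟨m', hm'⟩ := ball_nat hp hcp hRsub hr'0 (by linarith) hr'sph
    have hm'lt : m' < m₀ := by
      have : (m' : ℝ≥0∞) < (m₀ : ℝ≥0∞) := by
        rw [← hm']
        calc μ (closedBall x r') ≤ μ (closedBall x ρ) :=
              measure_mono (closedBall_subset_closedBall hr'2.le)
          _ < m₀ := hk
      exact_mod_cast this
    exact Nat.find_min hex hm'lt ⟨r', hr'0, by linarith, hr'sph, hm'⟩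
  exact ⟨m₀, r₀, hr₀0, hsub₀, le_antisymm hle hge, hball₀⟩

lemma small_ball (hp : 1 ≤ p) (hcp : CheapPlans p μ) {x : Pt} (hx : x ∈ UHP) :
    ∃ r : ℝ, 0 < r ∧ closedBall x r ⊆ UHP ∧
      (∀ y ∈ closedBall x r, y ≠ x → μ {y} = 0) ∧
      μ (closedBall x r) = μ {x} ∧ μ {x} ≠ ⊤ := by
  obtain ⟨m, r, hr0, hsub, hmx, hmball⟩ := atom_ball hp hcp hx
  have hfin : μ {x} ≠ ⊤ := by rw [hmx]; simp
  refine ⟨r, hr0, hsub, ?_, by rw [hmball, hmx], hfin⟩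
  intro y hy hne
  have hdisj : Disjoint ({y} : Set Pt) {x} := by simp [hne]
  have hunion : μ {y} + μ {x} = μ ({y} ∪ {x}) :=
    (measure_union hdisj (measurableSet_singleton x)).symm
  have hsubB : ({y} : Set Pt) ∪ {x} ⊆ closedBall x r :=
    union_subset (singleton_subset_iff.mpr hy)
      (singleton_subset_iff.mpr (mem_closedBall_self hr0.le))
  have hle : μ {y} + μ {x} ≤ 0 + μ {x} := by
    rw [zero_add, hunion, hmx, ← hmball]
    exact measure_mono hsubB
  have := (ENNReal.add_le_add_iff_right hfin).mp hle
  exact le_antisymm this zero_le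

lemma is_diagram_of_cheap (hp : 1 ≤ p) (hcp : CheapPlans p μ) (hμ0 : μ UHPᶜ = 0) :
    IsDiagram μ := by
  classical
  set n : Pt → ℕ := fun y =>
    if h : ∃ m : ℕ, μ {y} = (m : ℝ≥0∞) then Nat.find h else 0 with hn
  set X : Set Pt := {y | y ∈ UHP ∧ μ {y} ≠ 0} with hX
  set ν : Measure Pt := Measure.sum (fun y : X => (n y.1 : ℝ≥0∞) • Measure.dirac y.1) with hν
  have hnat : ∀ y ∈ UHP, (n y : ℝ≥0∞) = μ {y} := by
    intro y hy
    obtain ⟨m, r, -, -, hmy, -⟩ := atom_ball hp hcp hy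
    have h : ∃ m : ℕ, μ {y} = (m : ℝ≥0∞) := ⟨m, hmy⟩
    simp only [hn, dif_pos h]
    exact (Nat.find_spec h).symm
  have hν_apply : ∀ B : Set Pt, MeasurableSet B →
      ν B = ∑' i : X, if (i : Pt) ∈ B then (n i.1 : ℝ≥0∞) else 0 := by
    intro B hB
    rw [hν, Measure.sum_apply _ hB]
    refine tsum_congr fun i => ?_
    rw [Measure.smul_apply, smul_eq_mul, Measure.dirac_apply' _ hB]
    by_cases h : (i : Pt) ∈ B <;> simp [h]
  -- local equality of μ and ν
  have hlocal : ∀ x ∈ UHP, ∃ r : ℝ, 0 < r ∧ closedBall x r ⊆ UHP ∧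
      ∀ B ⊆ closedBall x r, MeasurableSet B → μ B = ν B := by
    intro x hx
    obtain ⟨r, hr0, hsub, hzero, hball, hfin⟩ := small_ball hp hcp hx
    refine ⟨r, hr0, hsub, ?_⟩
    intro B hBsub hBm
    have hdiff : μ (closedBall x r \ {x}) = 0 := by
      rw [measure_diff (singleton_subset_iff.mpr (mem_closedBall_self hr0.le))
        (measurableSet_singleton x).nullMeasurableSet hfin, hball, tsub_self]
    have hμB : μ B = if x ∈ B then μ {x} else 0 := by
      have h1 : μ (B \ {x}) = 0 :=
        measure_mono_null (diff_subset_diff_left hBsub) hdiff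
      have h2 := measure_inter_add_diff (μ := μ) B (measurableSet_singleton x)
      rw [h1, add_zero] at h2
      rw [← h2]
      by_cases hxB : x ∈ B
      · rw [Set.inter_eq_right.mpr (singleton_subset_iff.mpr hxB), if_pos hxB]
      · rw [Set.inter_singleton_eq_empty.mpr hxB, if_neg hxB, measure_empty]
    have hterm : ∀ i : X, (if (i : Pt) ∈ B then (n i.1 : ℝ≥0∞) else 0)
        = if (i : Pt) = x ∧ x ∈ B then μ {x} else 0 := by
      intro i
      by_cases hiB : (i : Pt) ∈ B
      · by_cases hix : (i : Pt) = x
        · rw [if_pos hiB, if_pos ⟨hix, hix ▸ hiB⟩, hix, hnat x hx]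
        · exact absurd (hzero _ (hBsub hiB) hix) i.2.2
      · rw [if_neg hiB, if_neg]
        rintro ⟨rfl, hxB⟩
        exact hiB hxB
    have hνB : ν B = if x ∈ B then μ {x} else 0 := by
      rw [hν_apply B hBm, tsum_congr hterm]
      by_cases hxB : x ∈ B
      · by_cases hxX : x ∈ X
        · rw [tsum_eq_single (⟨x, hxX⟩ : X), if_pos ⟨rfl, hxB⟩, if_pos hxB]
          intro i hi
          rw [if_neg]
          rintro ⟨hix, -⟩
          exact hi (Subtype.ext hix)
        · have hx0 : μ {x} = 0 := by
            by_contra h0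
            exact hxX ⟨hx, h0⟩
          have : ∀ i : X, (if (i : Pt) = x ∧ x ∈ B then μ {x} else 0) = 0 := by
            intro i
            rw [if_neg]
            rintro ⟨hix, -⟩
            exact hxX (hix ▸ i.2)
          rw [ENNReal.tsum_eq_zero.mpr this, if_pos hxB, hx0]
      · have : ∀ i : X, (if (i : Pt) = x ∧ x ∈ B then μ {x} else 0) = 0 := by
          intro i
          rw [if_neg]
          rintro ⟨-, hxB'⟩
          exact hxB hxB'
        rw [ENNReal.tsum_eq_zero.mpr this, if_neg hxB]
    rw [hμB, hνB]
  refine ⟨X, n, fun y hy => hy.1, ?_, ?_⟩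
  · -- local finiteness
    intro x hx
    obtain ⟨r, hr0, hsub, hzero, -, -⟩ := small_ball hp hcp hx
    refine ⟨closedBall x r, closedBall_mem_nhds x hr0, ?_⟩
    refine (Set.finite_singleton x).subset ?_
    rintro y ⟨hyX, hyB⟩
    rw [mem_singleton_iff]
    by_contra hne
    exact hyX.2 (hzero y hyB hne)
  · -- μ = ν
    choose! rad hrad0 hradsub hradeq using hlocal
    refine Measure.ext fun A hA => ?_
    have hμsplit : μ A = μ (A ∩ UHP) := by
      have h2 := measure_inter_add_diff (μ := μ) A uhp_meas
      have h1 : μ (A \ UHP) = 0 := measure_mono_null (diff_subset_compl A UHP) hμ0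
      rw [h1, add_zero] at h2
      exact h2.symm
    have hνnull : ν UHPᶜ = 0 := by
      rw [hν_apply UHPᶜ uhp_meas.compl]
      refine ENNReal.tsum_eq_zero.mpr fun i => ?_
      rw [if_neg]
      exact fun h => h i.2.1
    have hνsplit : ν A = ν (A ∩ UHP) := by
      have h2 := measure_inter_add_diff (μ := ν) A uhp_meas
      have h1 : ν (A \ UHP) = 0 := measure_mono_null (diff_subset_compl A UHP) hνnull
      rw [h1, add_zero] at h2
      exact h2.symm
    rw [hμsplit, hνsplit]
    -- countable cover of UHP by good balls
    obtain ⟨t, htc, hteq⟩ := TopologicalSpace.isOpen_iUnion_countable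
      (fun i : ↥UHP => ball (i : Pt) (rad (i : Pt))) (fun i => isOpen_ball)
    have hcover : UHP ⊆ ⋃ i : ↥UHP, ball (i : Pt) (rad (i : Pt)) := by
      intro y hy
      exact mem_iUnion.mpr ⟨⟨y, hy⟩, mem_ball_self (hrad0 y hy)⟩
    have htne : t.Nonempty := by
      obtain ⟨y, hy⟩ := uhp_nonempty
      have : y ∈ ⋃ i ∈ t, ball (i : Pt) (rad (i : Pt)) := hteq ▸ hcover hy
      obtain ⟨i, hi, -⟩ := mem_iUnion₂.mp this
      exact ⟨i, hi⟩
    obtain ⟨g, hg⟩ := Set.Countable.exists_eq_range htc htne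
    set C : ℕ → Set Pt := fun k => ball ((g k : Pt)) (rad (g k : Pt)) with hC
    have hcover' : A ∩ UHP ⊆ ⋃ k, C k := by
      intro z hz
      have : z ∈ ⋃ i ∈ t, ball (i : Pt) (rad (i : Pt)) := hteq ▸ hcover hz.2
      rw [hg] at this
      obtain ⟨i, ⟨k, rfl⟩, hzi⟩ := mem_iUnion₂.mp this
      exact mem_iUnion.mpr ⟨k, hzi⟩
    set D : ℕ → Set Pt := fun k => (A ∩ UHP ∩ C k) \ ⋃ (j : ℕ) (_ : j < k), C j with hD
    have hDm : ∀ k, MeasurableSet (D k) := by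
      intro k
      refine (((hA.inter uhp_meas).inter measurableSet_ball).diff ?_)
      exact MeasurableSet.iUnion fun j => MeasurableSet.iUnion fun _ => measurableSet_ball
    have hDlt : ∀ i j, i < j → Disjoint (D i) (D j) := by
      intro i j hij
      rw [Set.disjoint_left]
      rintro z ⟨⟨-, hzc⟩, -⟩ ⟨-, hznot⟩
      exact hznot (mem_iUnion₂.mpr ⟨i, hij, hzc⟩)
    have hDdisj : Pairwise (Function.onFun Disjoint D) := by
      intro i j hij
      rcases hij.lt_or_gt with h | h
      · exact hDlt i j h
      · exact (hDlt j i h).symm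
    have hDunion : (⋃ k, D k) = A ∩ UHP := by
      apply Set.Subset.antisymm
      · refine Set.iUnion_subset fun k => ?_
        rintro z ⟨⟨hz, -⟩, -⟩
        exact hz
      · intro z hz
        have hzC : ∃ k, z ∈ C k := mem_iUnion.mp (hcover' hz)
        refine mem_iUnion.mpr ⟨Nat.find hzC, ⟨hz, Nat.find_spec hzC⟩, ?_⟩
        intro hmem
        obtain ⟨j, hjlt, hjz⟩ := mem_iUnion₂.mp hmem
        exact Nat.find_min hzC hjlt hjz
    have hDeq : ∀ k, μ (D k) = ν (D k) := by
      intro k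
      have hgk := (g k).2
      refine hradeq (g k : Pt) hgk (D k) ?_ (hDm k)
      refine subset_trans ?_ ball_subset_closedBall
      rintro z ⟨⟨-, hzc⟩, -⟩
      exact hzc
    rw [← hDunion, measure_iUnion hDdisj hDm, measure_iUnion hDdisj hDm]
    exact tsum_congr hDeq

end Main

end Aux

/-- D^p is closed in (M^p, OT_p): an OT_p-limit of persistence
diagrams in M^p is a persistence diagram. -/
theorem stmt8 (p : ℝ) (hp : 1 ≤ p) (μs : ℕ → Measure Pt) (μ : Measure Pt)
    (hd : ∀ n, IsDiagram (μs n)) (hmp : ∀ n, MemMp p (μs n)) (hμ : MemMp p μ)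
    (hconv : Tendsto (fun n => OTe p (μs n) μ) atTop (𝓝 0)) :
    IsDiagram μ := by
  have hcp : CheapPlans p μ := by
    intro η hη
    obtain ⟨N, hN⟩ := (hconv.eventually_lt_const hη).exists
    simp only [OTe] at hN
    obtain ⟨π, hπ⟩ := iInf_lt_iff.mp hN
    obtain ⟨hmem, hlt⟩ := iInf_lt_iff.mp hπ
    obtain ⟨-, h1, h2⟩ := hmem
    exact ⟨μs N, π, hd N, h1, h2, hlt⟩
  exact is_diagram_of_cheap hp hcp hμ.1
end
end
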